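/- arXiv:1401.6833 — 3 statements merged into one kernel-verified Lean document; each statement's English description precedes it below -/
import Mathlib

section
/- (Coercivity of the KdV quadratic form in the weighted space.) Let L > 0 and define, for w ∈ C^∞ compactly supported in (0,L), a(w,w) := ∫₀^L w'(x) ( w''(x)/(L−x) + 2 w'(x)/(L−x)² + 2 w(x)/(L−x)³ + w(x)/(L−x) ) dx. Then for every ε ∈ (0, 1/3) and every w ∈ C^∞ compactly supported in (0,L): a(w,w) + (L/(18ε)) ∫₀^L w(x)²/(L−x) dx ≥ (1/6 − ε/2) ∫₀^L w'(x)²/(L−x)² dx. -/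
open MeasureTheory intervalIntegral Set

lemma aux_cont {L : ℝ} {f : ℝ → ℝ} (hf : Continuous f) (hs : tsupport f ⊆ Set.Iio L) (k : ℕ) :
    Continuous (fun x => f x / (L - x) ^ k) := by
  rw [continuous_iff_continuousAt]
  intro x
  rcases eq_or_ne x L with h | h
  · have hop : IsOpen (tsupport f)ᶜ := (isClosed_tsupport f).isOpen_compl
    have hL' : L ∈ (tsupport f)ᶜ := fun hc => lt_irrefl L (hs hc)
    have hx' : x ∈ (tsupport f)ᶜ := by rw [h]; exact hL'
    have hev : (fun y => f y / (L - y) ^ k) =ᶠ[nhds x] fun _ => (0:ℝ) := by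
      filter_upwards [hop.mem_nhds hx'] with y hy
      rw [image_eq_zero_of_notMem_tsupport hy, zero_div]
    exact (continuousAt_const).congr hev.symm
  · exact ContinuousAt.div hf.continuousAt (by fun_prop)
      (pow_ne_zero _ (sub_ne_zero.2 (Ne.symm h)))

lemma aux_supp_of {f g : ℝ → ℝ} (h : ∀ x, f x = 0 → g x = 0) : tsupport g ⊆ tsupport f :=
  closure_minimal (fun x hx => subset_closure (fun h0 => hx (h x h0))) (isClosed_tsupport f)

lemma aux_ii {L : ℝ} {f : ℝ → ℝ} (hf : Continuous f) (hs : tsupport f ⊆ Set.Ioo 0 L) (k : ℕ) :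
    IntervalIntegrable (fun x => f x / (L - x) ^ k) volume 0 L :=
  (aux_cont hf (hs.trans (fun _ hx => hx.2)) k).intervalIntegrable 0 L

lemma aux_dsupp {L : ℝ} {f : ℝ → ℝ} (hs : tsupport f ⊆ Set.Ioo 0 L) :
    tsupport (deriv f) ⊆ Set.Ioo 0 L :=
  (closure_minimal support_deriv_subset (isClosed_tsupport f)).trans hs

lemma aux_ibp {L : ℝ} (hL : 0 < L) {f : ℝ → ℝ} (hf : ContDiff ℝ (⊤:ℕ∞) f)
    (hs : tsupport f ⊆ Set.Ioo 0 L) (k : ℕ) :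
    ∫ x in (0:ℝ)..L, (deriv f x / (L - x) ^ (k+1) + (k+1) * f x / (L - x) ^ (k+2)) = 0 := by
  have hf' : Continuous (deriv f) := hf.continuous_deriv (by exact_mod_cast le_top)
  have hdf : Differentiable ℝ f := hf.differentiable (by simp)
  have hs' : tsupport (deriv f) ⊆ Set.Ioo 0 L := aux_dsupp hs
  have hop : IsOpen (tsupport f)ᶜ := (isClosed_tsupport f).isOpen_compl
  have key : ∀ x : ℝ, HasDerivAt (fun y => f y / (L - y) ^ (k+1))
      (deriv f x / (L - x) ^ (k+1) + (k+1) * f x / (L - x) ^ (k+2)) x := by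
    intro x
    rcases lt_or_ge x L with h | h
    · have h1 : HasDerivAt (fun y : ℝ => (L - y) ^ (k+1)) ((k+1) * (L - x) ^ k * (-1)) x := by
        simpa using (((hasDerivAt_id x).const_sub L).fun_pow (k+1))
      have hca : L - x ≠ 0 := sub_ne_zero.2 (ne_of_gt h)
      have h2 := ((hdf x).hasDerivAt.fun_div h1 (pow_ne_zero _ hca))
      refine h2.congr_deriv ?_
      rw [div_add_div _ _ (pow_ne_zero _ hca) (pow_ne_zero _ hca), div_eq_div_iff (pow_ne_zero _ (pow_ne_zero _ hca)) (mul_ne_zero (pow_ne_zero _ hca) (pow_ne_zero _ hca))]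
      ring
    · have hx : x ∈ (tsupport f)ᶜ := fun hc => absurd (hs hc).2 (not_lt.2 h)
      have hev : (fun y => f y / (L - y) ^ (k+1)) =ᶠ[nhds x] fun _ => (0:ℝ) := by
        filter_upwards [hop.mem_nhds hx] with y hy
        rw [image_eq_zero_of_notMem_tsupport hy, zero_div]
      have hd0 : deriv f x = 0 := by
        have hev2 : f =ᶠ[nhds x] fun _ => (0:ℝ) := by
          filter_upwards [hop.mem_nhds hx] with y hy using image_eq_zero_of_notMem_tsupport hy
        rw [hev2.deriv_eq]; simp
      have h0 : deriv f x / (L - x) ^ (k+1) + (k+1) * f x / (L - x) ^ (k+2) = 0 := by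
        rw [hd0, image_eq_zero_of_notMem_tsupport hx]; simp
      rw [h0]
      exact (hasDerivAt_const x (0:ℝ)).congr_of_eventuallyEq hev
  have hii : IntervalIntegrable
      (fun x => deriv f x / (L - x) ^ (k+1) + (k+1) * f x / (L - x) ^ (k+2)) volume 0 L := by
    have h1 := aux_ii hf' hs' (k+1)
    have h2 := aux_ii (L := L) (f := fun x => ((k:ℝ)+1) * f x) (by fun_prop)
      ((aux_supp_of (fun x h0 => by rw [h0, mul_zero])).trans hs) (k+2)
    simpa using h1.add h2
  have hres := intervalIntegral.integral_eq_sub_of_hasDerivAt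
    (f := fun y => f y / (L - y) ^ (k+1)) (fun x _ => key x) hii
  rw [hres]
  have hL0 : (0:ℝ) ∉ tsupport f := fun hc => lt_irrefl 0 (hs hc).1
  have hLL : L ∉ tsupport f := fun hc => lt_irrefl L (hs hc).2
  simp only [image_eq_zero_of_notMem_tsupport hL0, image_eq_zero_of_notMem_tsupport hLL,
    zero_div, sub_zero]

lemma aux_ibp2 {L : ℝ} (hL : 0 < L) {f : ℝ → ℝ} (hf : ContDiff ℝ (⊤:ℕ∞) f)
    (hs : tsupport f ⊆ Set.Ioo 0 L) (k : ℕ) :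
    ∫ x in (0:ℝ)..L, f x * deriv f x / (L - x) ^ (k+1)
      = -(((k:ℝ)+1)/2) * ∫ x in (0:ℝ)..L, (f x)^2 / (L - x) ^ (k+2) := by
  have hc : Continuous f := hf.continuous
  have hc' : Continuous (deriv f) := hf.continuous_deriv (by exact_mod_cast le_top)
  have hdf : Differentiable ℝ f := hf.differentiable (by simp)
  have hg : ContDiff ℝ (⊤:ℕ∞) (fun x => f x * f x) := hf.mul hf
  have hgs : tsupport (fun x => f x * f x) ⊆ Set.Ioo 0 L :=
    (aux_supp_of (fun x h0 => by rw [h0, zero_mul])).trans hs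
  have M := aux_ibp hL hg hgs k
  have hder : ∀ x, deriv (fun y => f y * f y) x = 2 * (f x * deriv f x) := by
    intro x; rw [deriv_fun_mul (hdf x) (hdf x)]; ring
  have M2 : ∫ x in (0:ℝ)..L,
      (2*(f x * deriv f x / (L - x) ^ (k+1)) + ((k:ℝ)+1)*((f x)^2/(L - x) ^ (k+2))) = 0 := by
    have hcong : Set.EqOn
        (fun x => 2*(f x * deriv f x / (L - x) ^ (k+1)) + ((k:ℝ)+1)*((f x)^2/(L - x) ^ (k+2)))
        (fun x => deriv (fun y => f y * f y) x / (L - x) ^ (k+1)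
          + ((k:ℝ)+1) * (f x * f x) / (L - x) ^ (k+2)) (Set.uIcc 0 L) := by
      intro x _
      simp only [hder]
      ring
    rw [intervalIntegral.integral_congr hcong]
    convert M using 2
  have i1 : IntervalIntegrable (fun x => f x * deriv f x / (L - x) ^ (k+1)) volume 0 L :=
    aux_ii (hc.mul hc') ((aux_supp_of (fun x h0 => by rw [Pi.mul_apply, h0, zero_mul])).trans hs) (k+1)
  have i2 : IntervalIntegrable (fun x => (f x)^2 / (L - x) ^ (k+2)) volume 0 L :=
    aux_ii (by fun_prop) ((aux_supp_of (fun x h0 => by rw [h0]; ring)).trans hs) (k+2)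
  rw [intervalIntegral.integral_add (i1.const_mul 2) (i2.const_mul _),
    intervalIntegral.integral_const_mul, intervalIntegral.integral_const_mul] at M2
  linarith [M2]

lemma aux_final (ε L IB IC ID IW IA : ℝ) (hε0 : 0 < ε) (hε3 : ε < 1/3) (hL : 0 < L)
    (hQ : ∀ a b : ℝ, 0 ≤ IB + a^2*IC + b^2*IW + (2*a)*(-(3/2)*IC) + (2*b)*(-(1/2)*ID)
      + (2*(a*b))*ID)
    (hW : IW ≤ L*IA) (hA : 0 ≤ IA) :
    (3/2*IB - 3*IC - 1/2*ID) + (L/(18*ε))*IA ≥ (1/6-ε/2)*IB := by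
  have h8 : (0:ℝ) < 8 + 3*ε := by linarith
  set r := Real.sqrt (27*ε/(8+3*ε)) with hrdef
  have hr0 : 0 ≤ r := Real.sqrt_nonneg _
  have hr2 : r^2 = 27*ε/(8+3*ε) := Real.sq_sqrt (by positivity)
  have hr2' : r^2*(8+3*ε) = 27*ε := by rw [hr2]; field_simp
  have h2r : (0:ℝ) < 2 + r := by linarith
  have hs0 : (0:ℝ) < 4/3 + ε/2 := by linarith
  obtain ⟨a, b, e1, e2, e3⟩ : ∃ a b : ℝ, (4/3+ε/2)*(a^2-3*a) = -3
      ∧ (4/3+ε/2)*(b*(2*a-1)) = -(1/2) ∧ (4/3+ε/2)*b^2 ≤ 1/(18*ε) := by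
    refine ⟨(3+r)/2, -(1/(2*(4/3+ε/2)*(2+r))), ?_, ?_, ?_⟩
    · linear_combination (1/24) * hr2'
    · field_simp
      ring
    · have hb : (4/3+ε/2)*(-(1/(2*(4/3+ε/2)*(2+r))))^2 = 1/(4*(4/3+ε/2)*(2+r)^2) := by
        field_simp
        ring
      rw [hb]
      apply one_div_le_one_div_of_le (by positivity)
      nlinarith [hr2', hr0, hε0, mul_nonneg hr0 hε0.le]
  have hQab := hQ a b
  have hQ2 : 0 ≤ (4/3+ε/2)*IB + ((4/3+ε/2)*(a^2-3*a))*IC + ((4/3+ε/2)*(b*(2*a-1)))*ID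
      + ((4/3+ε/2)*b^2)*IW := by
    have h := mul_nonneg hs0.le hQab
    have he : (4/3+ε/2)*(IB + a^2*IC + b^2*IW + (2*a)*(-(3/2)*IC) + (2*b)*(-(1/2)*ID)
        + (2*(a*b))*ID)
      = (4/3+ε/2)*IB + ((4/3+ε/2)*(a^2-3*a))*IC + ((4/3+ε/2)*(b*(2*a-1)))*ID
        + ((4/3+ε/2)*b^2)*IW := by ring
    linarith [h, he]
  rw [e1, e2] at hQ2
  have hsb2 : 0 ≤ (4/3+ε/2)*b^2 := by positivity
  have p1 : ((4/3+ε/2)*b^2)*IW ≤ ((4/3+ε/2)*b^2)*(L*IA) := mul_le_mul_of_nonneg_left hW hsb2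
  have p2 : ((4/3+ε/2)*b^2)*(L*IA) ≤ (1/(18*ε))*(L*IA) :=
    mul_le_mul_of_nonneg_right e3 (mul_nonneg hL.le hA)
  have hLIA : (L/(18*ε))*IA = (1/(18*ε))*(L*IA) := by ring
  linarith [hQ2, p1, p2, hLIA]



/-- Coercivity of the KdV quadratic form in the weighted space:
for `L > 0`, every `ε ∈ (0,1/3)` and every `w ∈ C^∞` compactly supported in `(0,L)`,
`a(w,w) + (L/(18ε)) ∫₀^L w²/(L−x) dx ≥ (1/6 − ε/2) ∫₀^L w'²/(L−x)² dx`,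
where `a(w,w) = ∫₀^L w'( w''/(L−x) + 2w'/(L−x)² + 2w/(L−x)³ + w/(L−x) ) dx`. -/
theorem stmt_12 (L : ℝ) (hL : 0 < L) (ε : ℝ) (hε : ε ∈ Set.Ioo (0:ℝ) (1/3))
    (w : ℝ → ℝ) (hw : ContDiff ℝ (⊤ : ℕ∞) w) (hsupp : tsupport w ⊆ Set.Ioo 0 L) :
    (∫ x in (0:ℝ)..L, deriv w x *
        (deriv (deriv w) x / (L - x) + 2 * deriv w x / (L - x) ^ 2
          + 2 * w x / (L - x) ^ 3 + w x / (L - x)))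
      + (L / (18 * ε)) * (∫ x in (0:ℝ)..L, (w x) ^ 2 / (L - x)) ≥
      (1 / 6 - ε / 2) * ∫ x in (0:ℝ)..L, (deriv w x) ^ 2 / (L - x) ^ 2 := by
  have hcw : Continuous w := hw.continuous
  have hcw' : Continuous (deriv w) := hw.continuous_deriv (by exact_mod_cast le_top)
  have hw' : ContDiff ℝ (⊤ : ℕ∞) (deriv w) := (contDiff_infty_iff_deriv.mp hw).2
  have hcw'' : Continuous (deriv (deriv w)) := hw'.continuous_deriv (by exact_mod_cast le_top)
  have hsw' : tsupport (deriv w) ⊆ Set.Ioo 0 L := aux_dsupp hsupp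
  -- supports
  have s_ww' : tsupport (fun x => w x * deriv w x) ⊆ Set.Ioo 0 L :=
    (aux_supp_of (fun x h0 => by rw [h0, zero_mul])).trans hsupp
  have s_w2 : tsupport (fun x => w x ^ 2) ⊆ Set.Ioo 0 L :=
    (aux_supp_of (fun x h0 => by rw [h0]; ring)).trans hsupp
  have s_w'2 : tsupport (fun x => deriv w x ^ 2) ⊆ Set.Ioo 0 L :=
    (aux_supp_of (fun x h0 => by rw [h0]; ring)).trans hsw'
  have s_w'w'' : tsupport (fun x => deriv w x * deriv (deriv w) x) ⊆ Set.Ioo 0 L :=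
    (aux_supp_of (fun x h0 => by rw [h0, zero_mul])).trans hsw'
  -- integrability
  have i1 : IntervalIntegrable (fun x => deriv w x * deriv (deriv w) x / (L - x)) volume 0 L := by
    have := aux_ii (hcw'.mul hcw'') s_w'w'' 1
    simpa using this
  have iB : IntervalIntegrable (fun x => deriv w x ^ 2 / (L - x) ^ 2) volume 0 L :=
    aux_ii (by fun_prop) s_w'2 2
  have i3 : IntervalIntegrable (fun x => w x * deriv w x / (L - x) ^ 3) volume 0 L :=
    aux_ii (hcw.mul hcw') s_ww' 3
  have i4 : IntervalIntegrable (fun x => w x * deriv w x / (L - x)) volume 0 L := by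
    have := aux_ii (hcw.mul hcw') s_ww' 1
    simpa using this
  have iC : IntervalIntegrable (fun x => w x ^ 2 / (L - x) ^ 4) volume 0 L :=
    aux_ii (by fun_prop) s_w2 4
  have iD : IntervalIntegrable (fun x => w x ^ 2 / (L - x) ^ 2) volume 0 L :=
    aux_ii (by fun_prop) s_w2 2
  have iA : IntervalIntegrable (fun x => w x ^ 2 / (L - x)) volume 0 L := by
    have := aux_ii (f := fun x => w x ^ 2) (by fun_prop) s_w2 1
    simpa using this
  have iW : IntervalIntegrable (fun x => w x ^ 2) volume 0 L :=
    (by fun_prop : Continuous fun x => w x ^ 2).intervalIntegrable 0 L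
  -- integration by parts identities
  have J1 := aux_ibp2 hL hw hsupp 2
  have J2 := aux_ibp2 hL hw hsupp 0
  have J3 := aux_ibp2 hL hw' hsw' 0
  norm_num at J1 J2 J3
  -- expansion of the a(w,w) integrand
  have isplit : (∫ x in (0:ℝ)..L, deriv w x *
        (deriv (deriv w) x / (L - x) + 2 * deriv w x / (L - x) ^ 2
          + 2 * w x / (L - x) ^ 3 + w x / (L - x)))
      = (∫ x in (0:ℝ)..L, deriv w x * deriv (deriv w) x / (L - x))
        + ((∫ x in (0:ℝ)..L, 2 * (deriv w x ^ 2 / (L - x) ^ 2))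
        + ((∫ x in (0:ℝ)..L, 2 * (w x * deriv w x / (L - x) ^ 3))
        + (∫ x in (0:ℝ)..L, w x * deriv w x / (L - x)))) := by
    have i2' : IntervalIntegrable (fun x => 2 * (deriv w x ^ 2 / (L - x) ^ 2)) volume 0 L :=
      iB.const_mul 2
    have i3' : IntervalIntegrable (fun x => 2 * (w x * deriv w x / (L - x) ^ 3)) volume 0 L :=
      i3.const_mul 2
    calc (∫ x in (0:ℝ)..L, deriv w x *
        (deriv (deriv w) x / (L - x) + 2 * deriv w x / (L - x) ^ 2
          + 2 * w x / (L - x) ^ 3 + w x / (L - x)))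
        = ∫ x in (0:ℝ)..L, (deriv w x * deriv (deriv w) x / (L - x)
            + (2 * (deriv w x ^ 2 / (L - x) ^ 2)
            + (2 * (w x * deriv w x / (L - x) ^ 3) + w x * deriv w x / (L - x)))) :=
          intervalIntegral.integral_congr (fun x _ => by ring)
      _ = (∫ x in (0:ℝ)..L, deriv w x * deriv (deriv w) x / (L - x))
          + (∫ x in (0:ℝ)..L, (2 * (deriv w x ^ 2 / (L - x) ^ 2)
            + (2 * (w x * deriv w x / (L - x) ^ 3) + w x * deriv w x / (L - x)))) :=
          intervalIntegral.integral_add i1 (i2'.add (i3'.add i4))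
      _ = (∫ x in (0:ℝ)..L, deriv w x * deriv (deriv w) x / (L - x))
          + ((∫ x in (0:ℝ)..L, 2 * (deriv w x ^ 2 / (L - x) ^ 2))
          + (∫ x in (0:ℝ)..L, (2 * (w x * deriv w x / (L - x) ^ 3)
              + w x * deriv w x / (L - x)))) := by
          rw [intervalIntegral.integral_add i2' (i3'.add i4)]
      _ = (∫ x in (0:ℝ)..L, deriv w x * deriv (deriv w) x / (L - x))
          + ((∫ x in (0:ℝ)..L, 2 * (deriv w x ^ 2 / (L - x) ^ 2))
          + ((∫ x in (0:ℝ)..L, 2 * (w x * deriv w x / (L - x) ^ 3))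
          + (∫ x in (0:ℝ)..L, w x * deriv w x / (L - x)))) := by
          rw [intervalIntegral.integral_add i3' i4]
  have c2 : (∫ x in (0:ℝ)..L, 2 * (deriv w x ^ 2 / (L - x) ^ 2))
      = 2 * ∫ x in (0:ℝ)..L, deriv w x ^ 2 / (L - x) ^ 2 :=
    intervalIntegral.integral_const_mul 2 _
  have c3 : (∫ x in (0:ℝ)..L, 2 * (w x * deriv w x / (L - x) ^ 3))
      = 2 * ∫ x in (0:ℝ)..L, w x * deriv w x / (L - x) ^ 3 :=
    intervalIntegral.integral_const_mul 2 _
  -- the quadratic-form inequality, for all a b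
  have hQall : ∀ a b : ℝ, 0 ≤ (∫ x in (0:ℝ)..L, deriv w x ^ 2 / (L - x) ^ 2)
      + a^2*(∫ x in (0:ℝ)..L, w x ^ 2 / (L - x) ^ 4) + b^2*(∫ x in (0:ℝ)..L, w x ^ 2)
      + (2*a)*(-(3/2)*(∫ x in (0:ℝ)..L, w x ^ 2 / (L - x) ^ 4))
      + (2*b)*(-(1/2)*(∫ x in (0:ℝ)..L, w x ^ 2 / (L - x) ^ 2))
      + (2*(a*b))*(∫ x in (0:ℝ)..L, w x ^ 2 / (L - x) ^ 2) := by
    intro a b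
    have hQ0 : 0 ≤ ∫ x in (0:ℝ)..L,
        (deriv w x / (L - x) + a * w x / (L - x) ^ 2 + b * w x)^2 :=
      intervalIntegral.integral_nonneg hL.le (fun x _ => sq_nonneg _)
    have q2 : IntervalIntegrable (fun x => a^2 * (w x ^ 2 / (L - x) ^ 4)) volume 0 L :=
      iC.const_mul _
    have q3 : IntervalIntegrable (fun x => b^2 * w x ^ 2) volume 0 L := iW.const_mul _
    have q4 : IntervalIntegrable (fun x => (2*a) * (w x * deriv w x / (L - x) ^ 3)) volume 0 L :=
      i3.const_mul _
    have q5 : IntervalIntegrable (fun x => (2*b) * (w x * deriv w x / (L - x))) volume 0 L :=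
      i4.const_mul _
    have q6 : IntervalIntegrable (fun x => (2*(a*b)) * (w x ^ 2 / (L - x) ^ 2)) volume 0 L :=
      iD.const_mul _
    have hexp : (∫ x in (0:ℝ)..L,
          (deriv w x / (L - x) + a * w x / (L - x) ^ 2 + b * w x)^2)
        = (∫ x in (0:ℝ)..L, deriv w x ^ 2 / (L - x) ^ 2)
          + ((∫ x in (0:ℝ)..L, a^2 * (w x ^ 2 / (L - x) ^ 4))
          + ((∫ x in (0:ℝ)..L, b^2 * w x ^ 2)
          + ((∫ x in (0:ℝ)..L, (2*a) * (w x * deriv w x / (L - x) ^ 3))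
          + ((∫ x in (0:ℝ)..L, (2*b) * (w x * deriv w x / (L - x)))
          + (∫ x in (0:ℝ)..L, (2*(a*b)) * (w x ^ 2 / (L - x) ^ 2)))))) := by
      calc (∫ x in (0:ℝ)..L,
          (deriv w x / (L - x) + a * w x / (L - x) ^ 2 + b * w x)^2)
          = ∫ x in (0:ℝ)..L, (deriv w x ^ 2 / (L - x) ^ 2
            + (a^2 * (w x ^ 2 / (L - x) ^ 4)
            + (b^2 * w x ^ 2
            + ((2*a) * (w x * deriv w x / (L - x) ^ 3)
            + ((2*b) * (w x * deriv w x / (L - x))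
            + (2*(a*b)) * (w x ^ 2 / (L - x) ^ 2)))))) :=
            by
            apply intervalIntegral.integral_congr
            intro x _
            simp only []
            rcases eq_or_ne (L - x) 0 with h | h
            · rw [h]; simp; ring
            · field_simp
              ring
        _ = _ := by
            rw [intervalIntegral.integral_add iB (q2.add (q3.add (q4.add (q5.add q6)))),
              intervalIntegral.integral_add q2 (q3.add (q4.add (q5.add q6))),
              intervalIntegral.integral_add q3 (q4.add (q5.add q6)),
              intervalIntegral.integral_add q4 (q5.add q6),
              intervalIntegral.integral_add q5 q6]
    have d2 : (∫ x in (0:ℝ)..L, a^2 * (w x ^ 2 / (L - x) ^ 4))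
        = a^2 * ∫ x in (0:ℝ)..L, w x ^ 2 / (L - x) ^ 4 :=
      intervalIntegral.integral_const_mul _ _
    have d3 : (∫ x in (0:ℝ)..L, b^2 * w x ^ 2)
        = b^2 * ∫ x in (0:ℝ)..L, w x ^ 2 := intervalIntegral.integral_const_mul _ _
    have d4 : (∫ x in (0:ℝ)..L, (2*a) * (w x * deriv w x / (L - x) ^ 3))
        = (2*a) * ∫ x in (0:ℝ)..L, w x * deriv w x / (L - x) ^ 3 :=
      intervalIntegral.integral_const_mul _ _
    have d5 : (∫ x in (0:ℝ)..L, (2*b) * (w x * deriv w x / (L - x)))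
        = (2*b) * ∫ x in (0:ℝ)..L, w x * deriv w x / (L - x) :=
      intervalIntegral.integral_const_mul _ _
    have d6 : (∫ x in (0:ℝ)..L, (2*(a*b)) * (w x ^ 2 / (L - x) ^ 2))
        = (2*(a*b)) * ∫ x in (0:ℝ)..L, w x ^ 2 / (L - x) ^ 2 :=
      intervalIntegral.integral_const_mul _ _
    rw [hexp, d2, d3, d4, d5, d6, J1, J2] at hQ0
    exact hQ0.trans_eq (by ring)
  -- comparison of the plain L² norm with the weighted one
  have hWle : (∫ x in (0:ℝ)..L, w x ^ 2) ≤ ∫ x in (0:ℝ)..L, L * (w x ^ 2 / (L - x)) := by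
    apply intervalIntegral.integral_mono_on hL.le iW (iA.const_mul L)
    intro x hx
    rcases eq_or_lt_of_le hx.2 with h | h
    · have hw0 : w x = 0 := by
        rw [h]; exact image_eq_zero_of_notMem_tsupport (fun hc => lt_irrefl L (hsupp hc).2)
      simp [hw0]
    · have hpos : 0 < L - x := by linarith
      have hrw : L * (w x ^ 2 / (L - x)) = L * w x ^ 2 / (L - x) := by ring
      rw [hrw, le_div_iff₀ hpos]
      nlinarith [sq_nonneg (w x), hx.1]
  have hW : (∫ x in (0:ℝ)..L, w x ^ 2) ≤ L * ∫ x in (0:ℝ)..L, w x ^ 2 / (L - x) := by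
    rw [intervalIntegral.integral_const_mul] at hWle
    exact hWle
  have hA : 0 ≤ ∫ x in (0:ℝ)..L, w x ^ 2 / (L - x) :=
    intervalIntegral.integral_nonneg hL.le
      (fun x hx => div_nonneg (sq_nonneg _) (by linarith [hx.2]))
  have AF := aux_final ε L (∫ x in (0:ℝ)..L, deriv w x ^ 2 / (L - x) ^ 2)
    (∫ x in (0:ℝ)..L, w x ^ 2 / (L - x) ^ 4)
    (∫ x in (0:ℝ)..L, w x ^ 2 / (L - x) ^ 2)
    (∫ x in (0:ℝ)..L, w x ^ 2)
    (∫ x in (0:ℝ)..L, w x ^ 2 / (L - x))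
    hε.1 hε.2 hL hQall hW hA
  linarith [AF, isplit, c2, c3, J1, J2, J3]
end

section
/- (Dissipativity identity for the KdV operator in the weighted space.) Let L > 0. For every w ∈ C³([0,L]) with w(0) = w(L) = 0 and w'(L) = 0, one has the identity: ∫₀^L ( −w'''(x) − w'(x) ) · w(x)/(L−x) dx = −(3/2) ∫₀^L w'(x)²/(L−x)² dx + 3 ∫₀^L w(x)²/(L−x)⁴ dx + (1/2) ∫₀^L w(x)²/(L−x)² dx − w'(0)²/(2L). (All integrals converge since w(L) = w'(L) = 0 forces w(x) = O((L−x)²) and w'(x) = O(L−x) near x = L.) -/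
open MeasureTheory Set intervalIntegral

private lemma stmt13_integrable_of_bound (a b : ℝ) (f : ℝ → ℝ) (hm : Measurable f) (C : ℝ)
    (hab : a ≤ b) (h : ∀ x ∈ Set.Icc a b, |f x| ≤ C) :
    IntervalIntegrable f MeasureTheory.volume a b := by
  rw [intervalIntegrable_iff_integrableOn_Ioc_of_le hab]
  apply MeasureTheory.Integrable.mono' (g := fun _ => C) ?_ hm.aestronglyMeasurable
  · filter_upwards [MeasureTheory.ae_restrict_mem measurableSet_Ioc] with x hx
    exact h x ⟨le_of_lt hx.1, hx.2⟩
  · rw [show Integrable (fun _ => C) (volume.restrict (Set.Ioc a b)) ↔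
        IntegrableOn (fun _ => C) (Set.Ioc a b) volume from Iff.rfl,
      MeasureTheory.integrableOn_const_iff]
    right; exact measure_Ioc_lt_top

set_option maxHeartbeats 1600000 in
/-- Dissipativity identity for the KdV operator in the weighted space:
for `L > 0` and `w ∈ C³([0,L])` with `w(0) = w(L) = 0` and `w'(L) = 0`,
`∫₀^L (−w''' − w') · w/(L−x) dx
  = −(3/2)∫₀^L w'²/(L−x)² dx + 3∫₀^L w²/(L−x)⁴ dx + (1/2)∫₀^L w²/(L−x)² dx − w'(0)²/(2L)`. -/
theorem stmt_13 (L : ℝ) (hL : 0 < L) (w : ℝ → ℝ) (hw : ContDiff ℝ 3 w)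
    (h0 : w 0 = 0) (hLval : w L = 0) (hL' : deriv w L = 0) :
    (∫ x in (0:ℝ)..L, (-(deriv (deriv (deriv w)) x) - deriv w x) * (w x / (L - x))) =
      -(3 / 2) * (∫ x in (0:ℝ)..L, (deriv w x) ^ 2 / (L - x) ^ 2)
        + 3 * (∫ x in (0:ℝ)..L, (w x) ^ 2 / (L - x) ^ 4)
        + (1 / 2) * (∫ x in (0:ℝ)..L, (w x) ^ 2 / (L - x) ^ 2)
        - (deriv w 0) ^ 2 / (2 * L) := by
  set w1 := deriv w with hw1def
  set w2 := deriv w1 with hw2def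
  set w3 := deriv w2 with hw3def
  -- smoothness facts
  have hcd1 : ContDiff ℝ 2 w1 := by
    have h3 : ContDiff ℝ (2 + 1) w := by exact_mod_cast hw
    exact (contDiff_succ_iff_deriv.mp h3).2.2
  have hcd2 : ContDiff ℝ 1 w2 := by
    have h2 : ContDiff ℝ (1 + 1) w1 := by exact_mod_cast hcd1
    exact (contDiff_succ_iff_deriv.mp h2).2.2
  have hdiffw : Differentiable ℝ w := hw.differentiable (by norm_num)
  have hdiffw1 : Differentiable ℝ w1 := hcd1.differentiable (by norm_num)
  have hdiffw2 : Differentiable ℝ w2 := hcd2.differentiable (by norm_num)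
  have hdw : ∀ x : ℝ, HasDerivAt w (w1 x) x := fun x => (hdiffw x).hasDerivAt
  have hdw1 : ∀ x : ℝ, HasDerivAt w1 (w2 x) x := fun x => (hdiffw1 x).hasDerivAt
  have hdw2 : ∀ x : ℝ, HasDerivAt w2 (w3 x) x := fun x => (hdiffw2 x).hasDerivAt
  have hcw : Continuous w := hw.continuous
  have hcw1 : Continuous w1 := hcd1.continuous
  have hcw2 : Continuous w2 := hcd2.continuous
  have hcw3 : Continuous w3 := (contDiff_succ_iff_deriv.mp
    (show ContDiff ℝ (0 + 1) w2 by exact_mod_cast hcd2)).2.2.continuous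
  -- bounds
  obtain ⟨C2', hC2'⟩ := (isCompact_Icc (a := (0:ℝ)) (b := L)).exists_bound_of_continuousOn
    hcw2.continuousOn
  obtain ⟨C3', hC3'⟩ := (isCompact_Icc (a := (0:ℝ)) (b := L)).exists_bound_of_continuousOn
    hcw3.continuousOn
  set C2 : ℝ := max C2' 0 with hC2def
  set C3 : ℝ := max C3' 0 with hC3def
  have hC2nn : 0 ≤ C2 := le_max_right _ _
  have hC3nn : 0 ≤ C3 := le_max_right _ _
  have hB2 : ∀ x ∈ Icc (0:ℝ) L, |w2 x| ≤ C2 := fun x hx =>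
    le_trans (by simpa using hC2' x hx) (le_max_left _ _)
  have hB3 : ∀ x ∈ Icc (0:ℝ) L, |w3 x| ≤ C3 := fun x hx =>
    le_trans (by simpa using hC3' x hx) (le_max_left _ _)
  have hB1 : ∀ x ∈ Icc (0:ℝ) L, |w1 x| ≤ C2 * (L - x) := by
    intro x hx
    have hftc : ∫ t in x..L, w2 t = w1 L - w1 x :=
      integral_deriv_eq_sub (fun t _ => hdiffw1 t) (hcw2.intervalIntegrable x L)
    have hval : w1 x = -(∫ t in x..L, w2 t) := by rw [hftc, hL']; ring
    have hbound : |∫ t in x..L, w2 t| ≤ C2 * |L - x| := by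
      rw [← Real.norm_eq_abs]
      apply intervalIntegral.norm_integral_le_of_norm_le_const
      intro t ht
      rw [uIoc_of_le hx.2] at ht
      exact hB2 t ⟨le_trans hx.1 (le_of_lt ht.1), ht.2⟩
    rw [hval, abs_neg]
    calc |∫ t in x..L, w2 t| ≤ C2 * |L - x| := hbound
      _ = C2 * (L - x) := by rw [abs_of_nonneg (by linarith [hx.2])]
  have hB0 : ∀ x ∈ Icc (0:ℝ) L, |w x| ≤ C2 * (L - x) ^ 2 := by
    intro x hx
    have hftc : ∫ t in x..L, w1 t = w L - w x :=
      integral_deriv_eq_sub (fun t _ => hdiffw t) (hcw1.intervalIntegrable x L)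
    have hval : w x = -(∫ t in x..L, w1 t) := by rw [hftc, hLval]; ring
    have hbound : |∫ t in x..L, w1 t| ≤ (C2 * (L - x)) * |L - x| := by
      rw [← Real.norm_eq_abs]
      apply intervalIntegral.norm_integral_le_of_norm_le_const
      intro t ht
      rw [uIoc_of_le hx.2] at ht
      have ht' : t ∈ Icc (0:ℝ) L := ⟨le_trans hx.1 (le_of_lt ht.1), ht.2⟩
      calc |w1 t| ≤ C2 * (L - t) := hB1 t ht'
        _ ≤ C2 * (L - x) := by
            apply mul_le_mul_of_nonneg_left _ hC2nn
            linarith [ht.1]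
    rw [hval, abs_neg]
    calc |∫ t in x..L, w1 t| ≤ (C2 * (L - x)) * |L - x| := hbound
      _ = C2 * (L - x) ^ 2 := by rw [abs_of_nonneg (by linarith [hx.2])]; ring
  -- the antiderivative of the difference of the integrands
  set G : ℝ → ℝ := fun x =>
    (-(w2 x * w x) + (1/2) * (w1 x) ^ 2 - (1/2) * (w x) ^ 2) / (L - x)
      + (w1 x * w x) / (L - x) ^ 2 - (w x) ^ 2 / (L - x) ^ 3 with hGdef
  set A : ℝ → ℝ := fun x => (-(w3 x) - w1 x) * (w x / (L - x)) with hAdef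
  set B : ℝ → ℝ := fun x =>
    -(3/2) * ((w1 x) ^ 2 / (L - x) ^ 2) + 3 * ((w x) ^ 2 / (L - x) ^ 4)
      + (1/2) * ((w x) ^ 2 / (L - x) ^ 2) with hBdef
  -- derivative of G on the open interval
  have hGderiv : ∀ x ∈ Ioo (0:ℝ) L, HasDerivAt G (A x - B x) x := by
    intro x hx
    have hd : L - x ≠ 0 := by have := hx.2; intro h; linarith [sub_eq_zero.mp h]
    have hden : HasDerivAt (fun y : ℝ => L - y) (-1) x := by
      simpa using (hasDerivAt_id x).const_sub L
    have ta : HasDerivAt (fun y => -(w2 y * w y)) (-(w3 x * w x + w2 x * w1 x)) x :=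
      ((hdw2 x).mul (hdw x)).neg
    have tb : HasDerivAt (fun y => (1/2 : ℝ) * (w1 y) ^ 2)
        ((1/2 : ℝ) * ((2 : ℕ) * w1 x ^ (2 - 1) * w2 x)) x := ((hdw1 x).pow 2).const_mul (1/2)
    have tc : HasDerivAt (fun y => (1/2 : ℝ) * (w y) ^ 2)
        ((1/2 : ℝ) * ((2 : ℕ) * w x ^ (2 - 1) * w1 x)) x := ((hdw x).pow 2).const_mul (1/2)
    have num1 := (ta.add tb).sub tc
    have T1 := num1.div hden hd
    have T2 := ((hdw1 x).mul (hdw x)).div (hden.pow 2) (pow_ne_zero 2 hd)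
    have T3 := ((hdw x).pow 2).div (hden.pow 3) (pow_ne_zero 3 hd)
    have hG := (T1.add T2).sub T3
    refine hG.congr_deriv ?_
    simp only [hAdef, hBdef]
    simp only [Pi.add_apply, Pi.sub_apply, Pi.neg_apply, Pi.pow_apply, Pi.mul_apply, Pi.div_apply]
    field_simp
    ring
  -- G is continuous on [0, L]
  have hGL : G L = 0 := by simp [hGdef, hLval]
  have hGcont : ContinuousOn G (Icc 0 L) := by
    intro x hx
    rcases eq_or_lt_of_le hx.2 with hxL | hxL
    · -- continuity at L via squeeze
      subst hxL
      have hbound : ∀ y ∈ Icc (0:ℝ) x, |G y| ≤ C2 ^ 2 * (4 + x ^ 2) * (x - y) := by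
        intro y hy
        rcases eq_or_lt_of_le hy.2 with hyL | hyL
        · subst hyL; rw [hGL]; simp
        · have hd : (0:ℝ) < x - y := by linarith
          have hdL : x - y ≤ x := by linarith [hy.1]
          have b0 := hB0 y hy
          have b1 := hB1 y hy
          have b2 := hB2 y hy
          have h1 : |(-(w2 y * w y) + (1/2) * (w1 y) ^ 2 - (1/2) * (w y) ^ 2) / (x - y)|
              ≤ C2 ^ 2 * (2 + x ^ 2) * (x - y) := by
            rw [abs_div, abs_of_pos hd, div_le_iff₀ hd]
            have habs : |(-(w2 y * w y) + (1/2) * (w1 y) ^ 2 - (1/2) * (w y) ^ 2)|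
                ≤ |w2 y| * |w y| + (1/2) * |w1 y| ^ 2 + (1/2) * |w y| ^ 2 := by
              have := abs_sub (-(w2 y * w y) + (1/2) * (w1 y) ^ 2) ((1/2) * (w y) ^ 2)
              have := abs_add_le (-(w2 y * w y)) ((1/2) * (w1 y) ^ 2)
              rw [abs_neg, abs_mul] at this
              calc |(-(w2 y * w y) + (1/2) * (w1 y) ^ 2 - (1/2) * (w y) ^ 2)|
                  ≤ |(-(w2 y * w y) + (1/2) * (w1 y) ^ 2)| + |(1/2) * (w y) ^ 2| :=
                    abs_sub _ _
                _ ≤ |w2 y| * |w y| + (1/2) * |w1 y| ^ 2 + (1/2) * |w y| ^ 2 := by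
                    have h12 : |(1/2 : ℝ) * (w1 y) ^ 2| = (1/2) * |w1 y| ^ 2 := by
                      rw [abs_mul, abs_pow]; norm_num
                    have h13 : |(1/2 : ℝ) * (w y) ^ 2| = (1/2) * |w y| ^ 2 := by
                      rw [abs_mul, abs_pow]; norm_num
                    linarith [this, h12, h13]
            have hwynn : (0:ℝ) ≤ |w y| := abs_nonneg _
            have hw1nn : (0:ℝ) ≤ |w1 y| := abs_nonneg _
            have e1 : |w2 y| * |w y| ≤ C2 * (C2 * (x - y) ^ 2) := mul_le_mul b2 b0 hwynn hC2nn
            have e2 : |w1 y| ^ 2 ≤ (C2 * (x - y)) ^ 2 := pow_le_pow_left₀ hw1nn b1 2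
            have e3 : |w y| ^ 2 ≤ (C2 * (x - y) ^ 2) ^ 2 := pow_le_pow_left₀ hwynn b0 2
            have e4 : (x - y) ^ 2 ≤ x ^ 2 := pow_le_pow_left₀ (le_of_lt hd) hdL 2
            have e5 : C2 ^ 2 * (x - y) ^ 2 * (x - y) ^ 2 ≤ C2 ^ 2 * (x - y) ^ 2 * x ^ 2 :=
              mul_le_mul_of_nonneg_left e4 (by positivity)
            nlinarith [habs, e1, e2, e3, e5, sq_nonneg (C2 * (x - y)),
              mul_nonneg (mul_nonneg (sq_nonneg C2) (sq_nonneg x)) (sq_nonneg (x - y))]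
          have h2 : |(w1 y * w y) / (x - y) ^ 2| ≤ C2 ^ 2 * (x - y) := by
            rw [abs_div, abs_of_pos (pow_pos hd 2), div_le_iff₀ (pow_pos hd 2), abs_mul]
            calc |w1 y| * |w y| ≤ (C2 * (x - y)) * (C2 * (x - y) ^ 2) :=
                  mul_le_mul b1 b0 (abs_nonneg _) (by positivity)
              _ = C2 ^ 2 * (x - y) * (x - y) ^ 2 := by ring
          have h3 : |(w y) ^ 2 / (x - y) ^ 3| ≤ C2 ^ 2 * (x - y) := by
            rw [abs_div, abs_of_pos (pow_pos hd 3), div_le_iff₀ (pow_pos hd 3), abs_pow]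
            calc |w y| ^ 2 ≤ (C2 * (x - y) ^ 2) ^ 2 := pow_le_pow_left₀ (abs_nonneg _) b0 2
              _ = C2 ^ 2 * (x - y) * (x - y) ^ 3 := by ring
          calc |G y| ≤ |(-(w2 y * w y) + (1/2) * (w1 y) ^ 2 - (1/2) * (w y) ^ 2) / (x - y)|
                + |(w1 y * w y) / (x - y) ^ 2| + |(w y) ^ 2 / (x - y) ^ 3| := by
                simp only [hGdef]
                calc |(-(w2 y * w y) + (1/2) * (w1 y) ^ 2 - (1/2) * (w y) ^ 2) / (x - y)
                      + (w1 y * w y) / (x - y) ^ 2 - (w y) ^ 2 / (x - y) ^ 3|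
                    ≤ |(-(w2 y * w y) + (1/2) * (w1 y) ^ 2 - (1/2) * (w y) ^ 2) / (x - y)
                      + (w1 y * w y) / (x - y) ^ 2| + |(w y) ^ 2 / (x - y) ^ 3| := abs_sub _ _
                  _ ≤ _ := by
                      have := abs_add_le
                        ((-(w2 y * w y) + (1/2) * (w1 y) ^ 2 - (1/2) * (w y) ^ 2) / (x - y))
                        ((w1 y * w y) / (x - y) ^ 2)
                      linarith
            _ ≤ C2 ^ 2 * (2 + x ^ 2) * (x - y) + C2 ^ 2 * (x - y) + C2 ^ 2 * (x - y) := by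
                linarith
            _ = C2 ^ 2 * (4 + x ^ 2) * (x - y) := by ring
      rw [ContinuousWithinAt, hGL]
      apply squeeze_zero_norm' (a := fun y => C2 ^ 2 * (4 + x ^ 2) * (x - y))
      · filter_upwards [self_mem_nhdsWithin] with y hy
        simpa [Real.norm_eq_abs] using hbound y hy
      · have : Filter.Tendsto (fun y : ℝ => C2 ^ 2 * (4 + x ^ 2) * (x - y)) (nhds x)
            (nhds (C2 ^ 2 * (4 + x ^ 2) * (x - x))) := by
          apply Filter.Tendsto.const_mul
          exact (continuous_const.sub continuous_id).tendsto x
        rw [sub_self, mul_zero] at this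
        exact this.mono_left nhdsWithin_le_nhds
    · -- continuity at interior/left points: L - x ≠ 0
      have hd : L - x ≠ 0 := by intro h; have := sub_eq_zero.mp h; linarith
      apply ContinuousAt.continuousWithinAt
      apply ContinuousAt.sub
      apply ContinuousAt.add
      · exact (((hcw2.continuousAt.mul hcw.continuousAt).neg.add
          (continuousAt_const.mul (hcw1.continuousAt.pow 2))).sub
          (continuousAt_const.mul (hcw.continuousAt.pow 2))).div
          ((continuous_const.sub continuous_id).continuousAt) hd
      · exact (hcw1.continuousAt.mul hcw.continuousAt).div
          (((continuous_const.sub continuous_id).pow 2).continuousAt) (pow_ne_zero 2 hd)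
      · exact (hcw.continuousAt.pow 2).div
          (((continuous_const.sub continuous_id).pow 3).continuousAt) (pow_ne_zero 3 hd)
  -- integrability of the pieces
  have hmL : Measurable fun x : ℝ => L - x := measurable_const.sub measurable_id
  have hI1 : IntervalIntegrable (fun x => (w1 x) ^ 2 / (L - x) ^ 2) volume 0 L := by
    apply stmt13_integrable_of_bound 0 L _ ((hcw1.measurable.pow_const 2).div
      (hmL.pow_const 2)) (C2 ^ 2) (le_of_lt hL)
    intro x hx
    rcases eq_or_lt_of_le hx.2 with hxL | hxL
    · subst hxL
      simp [show w1 x = 0 from hL']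
      positivity
    · have hd : (0:ℝ) < L - x := by linarith
      simp only [Pi.div_apply]
      rw [abs_div, abs_of_pos (pow_pos hd 2), div_le_iff₀ (pow_pos hd 2), abs_pow]
      calc |w1 x| ^ 2 ≤ (C2 * (L - x)) ^ 2 := pow_le_pow_left₀ (abs_nonneg _) (hB1 x hx) 2
        _ = C2 ^ 2 * (L - x) ^ 2 := by ring
  have hI2 : IntervalIntegrable (fun x => (w x) ^ 2 / (L - x) ^ 4) volume 0 L := by
    apply stmt13_integrable_of_bound 0 L _ ((hcw.measurable.pow_const 2).div
      (hmL.pow_const 4)) (C2 ^ 2) (le_of_lt hL)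
    intro x hx
    rcases eq_or_lt_of_le hx.2 with hxL | hxL
    · subst hxL; simp [hLval]; positivity
    · have hd : (0:ℝ) < L - x := by linarith
      simp only [Pi.div_apply]
      rw [abs_div, abs_of_pos (pow_pos hd 4), div_le_iff₀ (pow_pos hd 4), abs_pow]
      calc |w x| ^ 2 ≤ (C2 * (L - x) ^ 2) ^ 2 := pow_le_pow_left₀ (abs_nonneg _) (hB0 x hx) 2
        _ = C2 ^ 2 * (L - x) ^ 4 := by ring
  have hI3 : IntervalIntegrable (fun x => (w x) ^ 2 / (L - x) ^ 2) volume 0 L := by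
    apply stmt13_integrable_of_bound 0 L _ ((hcw.measurable.pow_const 2).div
      (hmL.pow_const 2)) (C2 ^ 2 * L ^ 2) (le_of_lt hL)
    intro x hx
    rcases eq_or_lt_of_le hx.2 with hxL | hxL
    · subst hxL; simp [hLval]; positivity
    · have hd : (0:ℝ) < L - x := by linarith
      have hdL : L - x ≤ L := by linarith [hx.1]
      simp only [Pi.div_apply]
      rw [abs_div, abs_of_pos (pow_pos hd 2), div_le_iff₀ (pow_pos hd 2), abs_pow]
      have e4 : (L - x) ^ 2 ≤ L ^ 2 := pow_le_pow_left₀ (le_of_lt hd) hdL 2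
      calc |w x| ^ 2 ≤ (C2 * (L - x) ^ 2) ^ 2 := pow_le_pow_left₀ (abs_nonneg _) (hB0 x hx) 2
        _ = C2 ^ 2 * (L - x) ^ 2 * (L - x) ^ 2 := by ring
        _ ≤ C2 ^ 2 * (L - x) ^ 2 * L ^ 2 := mul_le_mul_of_nonneg_left e4 (by positivity)
        _ = C2 ^ 2 * L ^ 2 * (L - x) ^ 2 := by ring
  have hIA : IntervalIntegrable A volume 0 L := by
    apply stmt13_integrable_of_bound 0 L _ ?_ ((C3 + C2 * L) * (C2 * L)) (le_of_lt hL)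
    · intro x hx
      rcases eq_or_lt_of_le hx.2 with hxL | hxL
      · subst hxL; simp [hAdef, hLval]; positivity
      · have hd : (0:ℝ) < L - x := by linarith
        have hdL : L - x ≤ L := by linarith [hx.1]
        have hq : |w x / (L - x)| ≤ C2 * L := by
          rw [abs_div, abs_of_pos hd, div_le_iff₀ hd]
          calc |w x| ≤ C2 * (L - x) ^ 2 := hB0 x hx
            _ = C2 * (L - x) * (L - x) := by ring
            _ ≤ C2 * L * (L - x) := by
                apply mul_le_mul_of_nonneg_right _ (le_of_lt hd)
                exact mul_le_mul_of_nonneg_left hdL hC2nn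
        have hf : |(-(w3 x) - w1 x)| ≤ C3 + C2 * L := by
          calc |(-(w3 x) - w1 x)| ≤ |(-(w3 x))| + |w1 x| := abs_sub _ _
            _ ≤ C3 + C2 * L := by
                rw [abs_neg]
                have := hB1 x hx
                have : |w1 x| ≤ C2 * L := le_trans this
                  (mul_le_mul_of_nonneg_left hdL hC2nn)
                linarith [hB3 x hx]
        simp only [hAdef]
        rw [abs_mul]
        exact mul_le_mul hf hq (abs_nonneg _) (by positivity)
    · exact ((hcw3.measurable.neg.sub hcw1.measurable).mul (hcw.measurable.div hmL))
  have hIB : IntervalIntegrable B volume 0 L :=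
    ((hI1.const_mul (-(3/2))).add (hI2.const_mul 3)).add (hI3.const_mul (1/2))
  -- FTC
  have hFTC : ∫ x in (0:ℝ)..L, (A x - B x) = G L - G 0 := by
    apply intervalIntegral.integral_eq_sub_of_hasDeriv_right_of_le (le_of_lt hL) hGcont
      (fun x hx => (hGderiv x hx).hasDerivWithinAt) (hIA.sub hIB)
  have hG0 : G 0 = (w1 0) ^ 2 / (2 * L) := by
    simp only [hGdef, h0]
    rw [sub_zero]
    field_simp
    ring
  rw [hGL, hG0] at hFTC
  have hsplit : ∫ x in (0:ℝ)..L, (A x - B x)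
      = (∫ x in (0:ℝ)..L, A x) - ∫ x in (0:ℝ)..L, B x :=
    intervalIntegral.integral_sub hIA hIB
  have hBsplit : ∫ x in (0:ℝ)..L, B x
      = -(3/2) * (∫ x in (0:ℝ)..L, (w1 x) ^ 2 / (L - x) ^ 2)
        + 3 * (∫ x in (0:ℝ)..L, (w x) ^ 2 / (L - x) ^ 4)
        + (1/2) * (∫ x in (0:ℝ)..L, (w x) ^ 2 / (L - x) ^ 2) := by
    simp only [hBdef]
    rw [intervalIntegral.integral_add ((hI1.const_mul (-(3/2))).add (hI2.const_mul 3))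
      (hI3.const_mul (1/2)), intervalIntegral.integral_add (hI1.const_mul (-(3/2)))
      (hI2.const_mul 3), intervalIntegral.integral_const_mul,
      intervalIntegral.integral_const_mul, intervalIntegral.integral_const_mul]
  rw [hsplit, hBsplit] at hFTC
  have hgoal : (∫ x in (0:ℝ)..L, A x)
      = -(3/2) * (∫ x in (0:ℝ)..L, (w1 x) ^ 2 / (L - x) ^ 2)
        + 3 * (∫ x in (0:ℝ)..L, (w x) ^ 2 / (L - x) ^ 4)
        + (1/2) * (∫ x in (0:ℝ)..L, (w x) ^ 2 / (L - x) ^ 2)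
        - (w1 0) ^ 2 / (2 * L) := by linarith
  simpa only [hAdef] using hgoal
end

section
/- (A priori estimate for linear KdV with H⁻¹ forcing, weighted by x.) Let L, T > 0. There exists a constant C > 0 such that for every g ∈ C^∞([0,T]×[0,L]) and every u ∈ C^∞([0,T]×[0,L]) satisfying u_t + u_x + u_xxx = g_x on (0,T)×(0,L) and u(t,0) = u(t,L) = u_x(t,L) = 0 for all t ∈ [0,T], one has: max_{t∈[0,T]} ∫₀^L x · u(t,x)² dx + ∫₀^T∫₀^L u_x(t,x)² dx dt ≤ C ( ∫₀^L x · u(0,x)² dx + ∫₀^T∫₀^L g(t,x)² dx dt ). -/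
/-- Partial derivative in the space variable (second argument). -/
noncomputable def pdx (f : ℝ → ℝ → ℝ) : ℝ → ℝ → ℝ := fun t x => deriv (f t) x

/-- Partial derivative in the time variable (first argument). -/
noncomputable def pdt (f : ℝ → ℝ → ℝ) : ℝ → ℝ → ℝ := fun t x => deriv (fun s => f s x) t

open Function Set intervalIntegral MeasureTheory Metric

section Helpers

lemma hasDerivAt_slice_t {F : ℝ → ℝ → ℝ} (hF : ContDiff ℝ (⊤ : ℕ∞) (uncurry F)) (t x : ℝ) :
    HasDerivAt (fun s => F s x) (fderiv ℝ (uncurry F) (t, x) (1, 0)) t := by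
  have h1 : HasDerivAt (fun s : ℝ => ((s, x) : ℝ × ℝ)) (1, 0) t :=
    (hasDerivAt_id t).prodMk (hasDerivAt_const t x)
  have h2 := (hF.differentiable (by simp) (t, x)).hasFDerivAt
  exact h2.comp_hasDerivAt t h1

lemma hasDerivAt_slice_x {F : ℝ → ℝ → ℝ} (hF : ContDiff ℝ (⊤ : ℕ∞) (uncurry F)) (t x : ℝ) :
    HasDerivAt (fun y => F t y) (fderiv ℝ (uncurry F) (t, x) (0, 1)) x := by
  have h1 : HasDerivAt (fun y : ℝ => ((t, y) : ℝ × ℝ)) (0, 1) x :=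
    (hasDerivAt_const x t).prodMk (hasDerivAt_id x)
  have h2 := (hF.differentiable (by simp) (t, x)).hasFDerivAt
  exact h2.comp_hasDerivAt x h1

lemma pdt_eq_fderiv {F : ℝ → ℝ → ℝ} (hF : ContDiff ℝ (⊤ : ℕ∞) (uncurry F)) (t x : ℝ) :
    pdt F t x = fderiv ℝ (uncurry F) (t, x) (1, 0) := (hasDerivAt_slice_t hF t x).deriv

lemma pdx_eq_fderiv {F : ℝ → ℝ → ℝ} (hF : ContDiff ℝ (⊤ : ℕ∞) (uncurry F)) (t x : ℝ) :
    pdx F t x = fderiv ℝ (uncurry F) (t, x) (0, 1) := (hasDerivAt_slice_x hF t x).deriv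

lemma hasDerivAt_pdt {F : ℝ → ℝ → ℝ} (hF : ContDiff ℝ (⊤ : ℕ∞) (uncurry F)) (t x : ℝ) :
    HasDerivAt (fun s => F s x) (pdt F t x) t := by
  rw [pdt_eq_fderiv hF]; exact hasDerivAt_slice_t hF t x

lemma hasDerivAt_pdx {F : ℝ → ℝ → ℝ} (hF : ContDiff ℝ (⊤ : ℕ∞) (uncurry F)) (t x : ℝ) :
    HasDerivAt (F t) (pdx F t x) x := by
  rw [pdx_eq_fderiv hF]; exact hasDerivAt_slice_x hF t x

lemma contDiff_pdt {F : ℝ → ℝ → ℝ} (hF : ContDiff ℝ (⊤ : ℕ∞) (uncurry F)) :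
    ContDiff ℝ (⊤ : ℕ∞) (uncurry (pdt F)) := by
  have h : uncurry (pdt F) = fun p : ℝ × ℝ => fderiv ℝ (uncurry F) p (1, 0) := by
    funext p; exact pdt_eq_fderiv hF p.1 p.2
  rw [h]
  exact (hF.fderiv_right (by exact_mod_cast le_top)).clm_apply contDiff_const

lemma contDiff_pdx {F : ℝ → ℝ → ℝ} (hF : ContDiff ℝ (⊤ : ℕ∞) (uncurry F)) :
    ContDiff ℝ (⊤ : ℕ∞) (uncurry (pdx F)) := by
  have h : uncurry (pdx F) = fun p : ℝ × ℝ => fderiv ℝ (uncurry F) p (0, 1) := by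
    funext p; exact pdx_eq_fderiv hF p.1 p.2
  rw [h]
  exact (hF.fderiv_right (by exact_mod_cast le_top)).clm_apply contDiff_const

lemma cont_slice {F : ℝ → ℝ → ℝ} (hF : Continuous (uncurry F)) (t : ℝ) :
    Continuous (F t) := hF.comp (continuous_const.prodMk continuous_id)

lemma hasDerivAt_int {F : ℝ → ℝ → ℝ} (hF : ContDiff ℝ (⊤ : ℕ∞) (uncurry F)) (a b t₀ : ℝ) :
    HasDerivAt (fun t => ∫ x in a..b, F t x) (∫ x in a..b, pdt F t₀ x) t₀ := by
  have hFc : Continuous (uncurry F) := hF.continuous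
  have hF'c : Continuous (uncurry (pdt F)) := (contDiff_pdt hF).continuous
  set K : Set (ℝ × ℝ) := Icc (t₀ - 1) (t₀ + 1) ×ˢ uIcc a b with hK
  have hKc : IsCompact K := (isCompact_Icc).prod isCompact_uIcc
  obtain ⟨M, hM⟩ := hKc.exists_bound_of_continuousOn hF'c.continuousOn
  refine (intervalIntegral.hasDerivAt_integral_of_dominated_loc_of_deriv_le (F := F)
    (F' := pdt F) (bound := fun _ => M) (Metric.ball_mem_nhds t₀ one_pos) ?_ ?_ ?_ ?_ ?_ ?_).2
  · filter_upwards with t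
    exact (cont_slice hFc t).aestronglyMeasurable
  · exact (cont_slice hFc t₀).intervalIntegrable a b
  · exact (cont_slice hF'c t₀).aestronglyMeasurable
  · filter_upwards with x hx t ht
    have h := abs_lt.1 (by simpa [Real.norm_eq_abs] using mem_ball_iff_norm.1 ht)
    exact hM (t, x) ⟨⟨by linarith [h.1], by linarith [h.2]⟩, uIoc_subset_uIcc hx⟩
  · exact intervalIntegrable_const
  · filter_upwards with x hx t ht using hasDerivAt_pdt hF t x

/-- Cauchy–Schwarz for interval integrals, special form. -/
lemma sq_integral_le {f : ℝ → ℝ} (hf : Continuous f) {x : ℝ} (hx : 0 ≤ x) :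
    (∫ s in (0:ℝ)..x, f s) ^ 2 ≤ x * ∫ s in (0:ℝ)..x, (f s) ^ 2 := by
  rcases hx.eq_or_lt with h | hx'
  · simp [← h]
  · set A := ∫ s in (0:ℝ)..x, f s with hA
    set lam := A / x with hlam
    have h0 : 0 ≤ ∫ s in (0:ℝ)..x, (f s - lam) ^ 2 :=
      intervalIntegral.integral_nonneg hx fun s _ => sq_nonneg _
    have e1 : ∫ s in (0:ℝ)..x, (f s - lam) ^ 2
        = (∫ s in (0:ℝ)..x, f s ^ 2) - 2 * lam * A + lam ^ 2 * x := by
      have h2 : (fun s => (f s - lam) ^ 2)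
          = fun s => (f s ^ 2 - 2 * lam * f s) + lam ^ 2 := by
        funext s; ring
      rw [h2, intervalIntegral.integral_add (f := fun s => f s ^ 2 - 2 * lam * f s) (((hf.pow 2).sub
        ((continuous_const.mul hf))).intervalIntegrable _ _) intervalIntegrable_const,
        intervalIntegral.integral_sub ((hf.fun_pow 2).intervalIntegrable _ _)
          ((continuous_const.fun_mul hf).intervalIntegrable _ _),
        intervalIntegral.integral_const_mul, intervalIntegral.integral_const]
      simp [← hA]
      ring
    rw [e1] at h0
    have hne : x ≠ 0 := hx'.ne'
    have hlam2 : lam * x = A := by rw [hlam]; field_simp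
    nlinarith [h0, hx', sq_nonneg lam, mul_pos hx' hx']

end Helpers

set_option maxHeartbeats 4000000 in
/-- a priori estimate for linear KdV with `H⁻¹` forcing `g_x`,
in the weighted space `L²_{x dx}`:
`max_{t∈[0,T]} ∫ x u(t)² dx + ∫∫ u_x² ≤ C (∫ x u(0)² dx + ∫∫ g²)`
(the max over `t` is expressed as a bound for every `t ∈ [0,T]`). -/
theorem stmt_14 (L T : ℝ) (hL : 0 < L) (hT : 0 < T) :
    ∃ C : ℝ, 0 < C ∧
      ∀ g u : ℝ → ℝ → ℝ, ContDiff ℝ (⊤ : ℕ∞) (Function.uncurry g) →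
        ContDiff ℝ (⊤ : ℕ∞) (Function.uncurry u) →
        (∀ t ∈ Set.Ioo (0:ℝ) T, ∀ x ∈ Set.Ioo (0:ℝ) L,
          pdt u t x + pdx u t x + pdx (pdx (pdx u)) t x = pdx g t x) →
        (∀ t ∈ Set.Icc (0:ℝ) T, u t 0 = 0 ∧ u t L = 0 ∧ pdx u t L = 0) →
        ∀ t ∈ Set.Icc (0:ℝ) T,
          (∫ x in (0:ℝ)..L, x * (u t x) ^ 2)
            + (∫ τ in (0:ℝ)..T, ∫ x in (0:ℝ)..L, (pdx u τ x) ^ 2) ≤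
          C * ((∫ x in (0:ℝ)..L, x * (u 0 x) ^ 2)
            + ∫ τ in (0:ℝ)..T, ∫ x in (0:ℝ)..L, (g τ x) ^ 2) := by
  have hδ0 : 0 < min L (1/2) := lt_min hL (by norm_num)
  set δ : ℝ := min L (1/2) with hδdef
  have hδL : δ ≤ L := min_le_left _ _
  have hδhalf : δ ≤ 1/2 := min_le_right _ _
  set K : ℝ := 2 / δ with hKdef
  have hK0 : 0 < K := by positivity
  refine ⟨2 * Real.exp (K * T) * (1 + L ^ 2), by positivity, ?_⟩
  intro g u hg hu hpde hbc t ht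
  -- abbreviations
  set E : ℝ → ℝ := fun τ => ∫ x in (0:ℝ)..L, x * u τ x ^ 2 with hEdef
  set D : ℝ → ℝ := fun τ => ∫ x in (0:ℝ)..L, pdx u τ x ^ 2 with hDdef
  set cg : ℝ → ℝ := fun τ => ∫ x in (0:ℝ)..L, g τ x ^ 2 with hcgdef
  set G : ℝ → ℝ := fun τ => ∫ s in (0:ℝ)..τ, (1 + L ^ 2) * cg s with hGdef
  set ID : ℝ → ℝ := fun τ => ∫ s in (0:ℝ)..τ, D s with hIDdef
  -- nonnegativity facts
  have hEnn : ∀ τ, 0 ≤ E τ := by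
    intro τ
    refine intervalIntegral.integral_nonneg hL.le fun x hx => mul_nonneg hx.1 (sq_nonneg _)
  have hDnn : ∀ τ, 0 ≤ D τ := by
    intro τ
    exact intervalIntegral.integral_nonneg hL.le fun x hx => by positivity
  have hcgnn : ∀ τ, 0 ≤ cg τ := by
    intro τ
    exact intervalIntegral.integral_nonneg hL.le fun x hx => by positivity
  -- continuity of D and cg
  have hDc : Continuous D := by
    refine continuous_parametric_intervalIntegral_of_continuous' ?_ 0 L
    exact ((contDiff_pdx hu).continuous.pow 2 : Continuous fun p : ℝ × ℝ => (uncurry (pdx u) p) ^ 2)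
  have hcgc : Continuous cg := by
    refine continuous_parametric_intervalIntegral_of_continuous' ?_ 0 L
    exact (hg.continuous.pow 2 : Continuous fun p : ℝ × ℝ => (uncurry g p) ^ 2)
  have hGnn : ∀ τ ∈ Icc (0:ℝ) T, 0 ≤ G τ := fun τ hτ =>
    intervalIntegral.integral_nonneg hτ.1 fun s hs => mul_nonneg (by positivity) (hcgnn s)
  have hIDnn : ∀ τ ∈ Icc (0:ℝ) T, 0 ≤ ID τ := fun τ hτ =>
    intervalIntegral.integral_nonneg hτ.1 fun s hs => hDnn s
  have hGmono : ∀ τ ∈ Icc (0:ℝ) T, G τ ≤ G T := by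
    intro τ hτ
    have h1 : IntervalIntegrable (fun s => (1 + L ^ 2) * cg s) volume 0 τ :=
      (continuous_const.mul hcgc).intervalIntegrable _ _
    have h2 : IntervalIntegrable (fun s => (1 + L ^ 2) * cg s) volume τ T :=
      (continuous_const.mul hcgc).intervalIntegrable _ _
    have := intervalIntegral.integral_add_adjacent_intervals h1 h2
    have h3 : 0 ≤ ∫ s in τ..T, (1 + L ^ 2) * cg s :=
      intervalIntegral.integral_nonneg hτ.2 fun s hs => mul_nonneg (by positivity) (hcgnn s)
    simp only [hGdef]
    linarith [this]
  -- derivative of E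
  have hEd : ∀ τ : ℝ, HasDerivAt E (∫ x in (0:ℝ)..L, 2 * x * u τ x * pdt u τ x) τ := by
    intro τ
    have hF : ContDiff ℝ (⊤ : ℕ∞) (uncurry (fun t y => y * u t y ^ 2)) :=
      contDiff_snd.mul (hu.pow 2)
    have h := hasDerivAt_int hF 0 L τ
    have heq : (∫ x in (0:ℝ)..L, pdt (fun t y => y * u t y ^ 2) τ x)
        = ∫ x in (0:ℝ)..L, 2 * x * u τ x * pdt u τ x := by
      refine intervalIntegral.integral_congr fun x _ => ?_
      have h2 : pdt (fun t y => y * u t y ^ 2) τ x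
          = x * ((2 : ℕ) * u τ x ^ (2 - 1) * pdt u τ x) :=
        (((hasDerivAt_pdt hu τ x).pow 2).const_mul x).deriv
      rw [h2]; push_cast; ring
    rw [← heq]
    exact h
  -- energy identity from the PDE and boundary conditions
  have hIdent : ∀ τ ∈ Ioo (0:ℝ) T,
      (∫ x in (0:ℝ)..L, 2 * x * u τ x * pdt u τ x)
        = (∫ x in (0:ℝ)..L, u τ x ^ 2) - 3 * D τ
          - (∫ x in (0:ℝ)..L, (2 * u τ x * g τ x + 2 * x * pdx u τ x * g τ x)) := by
    intro τ hτ
    obtain ⟨hb0, hbL, hbvL⟩ := hbc τ ⟨hτ.1.le, hτ.2.le⟩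
    have hvsm : ContDiff ℝ (⊤ : ℕ∞) (uncurry (pdx u)) := contDiff_pdx hu
    have hwsm : ContDiff ℝ (⊤ : ℕ∞) (uncurry (pdx (pdx u))) := contDiff_pdx hvsm
    have hcu : Continuous (u τ) := cont_slice hu.continuous τ
    have hcv : Continuous (pdx u τ) := cont_slice hvsm.continuous τ
    have hcw : Continuous (pdx (pdx u) τ) := cont_slice hwsm.continuous τ
    have hcz : Continuous (pdx (pdx (pdx u)) τ) := cont_slice (contDiff_pdx hwsm).continuous τ
    have hcg1 : Continuous (g τ) := cont_slice hg.continuous τ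
    have hch : Continuous (pdx g τ) := cont_slice (contDiff_pdx hg).continuous τ
    have hcid : Continuous (fun x : ℝ => 2 * x) := continuous_const.mul continuous_id
    -- Step A: substitute the PDE (a.e. in x)
    have hA : (∫ x in (0:ℝ)..L, 2 * x * u τ x * pdt u τ x)
        = ∫ x in (0:ℝ)..L, 2 * x * u τ x *
            (pdx g τ x - pdx u τ x - pdx (pdx (pdx u)) τ x) := by
      refine intervalIntegral.integral_congr_ae ?_
      have hne : ∀ᵐ x : ℝ, x ≠ L := by
        rw [ae_iff]
        have he : {a : ℝ | ¬ a ≠ L} = {L} := by ext a; simp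
        rw [he]
        exact measure_singleton L
      filter_upwards [hne] with x hxne hx
      rw [uIoc_of_le hL.le] at hx
      have hxI : x ∈ Ioo (0:ℝ) L := ⟨hx.1, lt_of_le_of_ne hx.2 hxne⟩
      have hp := hpde τ hτ x hxI
      have he : pdt u τ x = pdx g τ x - pdx u τ x - pdx (pdx (pdx u)) τ x := by linarith
      rw [he]
    -- integrability of the three pieces
    have hint1 : IntervalIntegrable (fun x => 2 * x * u τ x * pdx g τ x) volume 0 L :=
      ((hcid.mul hcu).mul hch).intervalIntegrable _ _
    have hint2 : IntervalIntegrable (fun x => 2 * x * u τ x * pdx u τ x) volume 0 L :=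
      ((hcid.mul hcu).mul hcv).intervalIntegrable _ _
    have hint3 : IntervalIntegrable (fun x => 2 * x * u τ x * pdx (pdx (pdx u)) τ x)
        volume 0 L := ((hcid.mul hcu).mul hcz).intervalIntegrable _ _
    have hB : (∫ x in (0:ℝ)..L, 2 * x * u τ x *
            (pdx g τ x - pdx u τ x - pdx (pdx (pdx u)) τ x))
        = (∫ x in (0:ℝ)..L, 2 * x * u τ x * pdx g τ x)
          - (∫ x in (0:ℝ)..L, 2 * x * u τ x * pdx u τ x)
          - ∫ x in (0:ℝ)..L, 2 * x * u τ x * pdx (pdx (pdx u)) τ x := by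
      rw [show (fun x => 2 * x * u τ x * (pdx g τ x - pdx u τ x - pdx (pdx (pdx u)) τ x))
          = fun x => (2 * x * u τ x * pdx g τ x - 2 * x * u τ x * pdx u τ x)
            - 2 * x * u τ x * pdx (pdx (pdx u)) τ x from funext fun x => by ring,
        intervalIntegral.integral_sub (hint1.sub hint2) hint3,
        intervalIntegral.integral_sub hint1 hint2]
    -- identity (i): ∫ 2xu u_x = - ∫ u²
    have hIv : (∫ x in (0:ℝ)..L, 2 * x * u τ x * pdx u τ x)
        = - ∫ x in (0:ℝ)..L, u τ x ^ 2 := by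
      have hps : ∀ x ∈ uIcc (0:ℝ) L, HasDerivAt (fun y => y * u τ y ^ 2)
          (u τ x ^ 2 + 2 * x * u τ x * pdx u τ x) x := by
        intro x _
        have h := (hasDerivAt_id x).fun_mul ((hasDerivAt_pdx hu τ x).fun_pow 2)
        refine h.congr_deriv ?_
        push_cast; simp only [id_eq]; ring
      have key := intervalIntegral.integral_eq_sub_of_hasDerivAt hps
        (((hcu.pow 2).add ((hcid.mul hcu).mul hcv)).intervalIntegrable _ _)
      rw [intervalIntegral.integral_add ((hcu.fun_pow 2).intervalIntegrable _ _)
        (((hcid.fun_mul hcu).fun_mul hcv).intervalIntegrable _ _)] at key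
      have key2 : (∫ x in (0:ℝ)..L, u τ x ^ 2)
          + (∫ x in (0:ℝ)..L, 2 * x * u τ x * pdx u τ x) = 0 := by
        simpa [hbL] using key
      linarith [key2]
    -- identity (iia): ∫ 2u u_xx = -2 ∫ u_x²
    have hIw1 : (∫ x in (0:ℝ)..L, 2 * (u τ x * pdx (pdx u) τ x))
        = - (2 * ∫ x in (0:ℝ)..L, pdx u τ x ^ 2) := by
      have hps : ∀ x ∈ uIcc (0:ℝ) L, HasDerivAt (fun y => 2 * (u τ y * pdx u τ y))
          (2 * (pdx u τ x ^ 2) + 2 * (u τ x * pdx (pdx u) τ x)) x := by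
        intro x _
        have h := ((hasDerivAt_pdx hu τ x).fun_mul (hasDerivAt_pdx hvsm τ x)).const_mul (2:ℝ)
        refine h.congr_deriv ?_
        ring
      have key := intervalIntegral.integral_eq_sub_of_hasDerivAt hps
        (((continuous_const.mul (hcv.pow 2)).add
          (continuous_const.mul (hcu.mul hcw))).intervalIntegrable _ _)
      rw [intervalIntegral.integral_add ((continuous_const.fun_mul (hcv.fun_pow 2)).intervalIntegrable _ _)
        ((continuous_const.fun_mul (hcu.fun_mul hcw)).intervalIntegrable _ _),
        intervalIntegral.integral_const_mul] at key
      have key2 : 2 * (∫ x in (0:ℝ)..L, pdx u τ x ^ 2)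
          + (∫ x in (0:ℝ)..L, 2 * (u τ x * pdx (pdx u) τ x)) = 0 := by
        simpa [hb0, hbL] using key
      linarith [key2]
    -- identity (iib): ∫ 2x u_x u_xx = - ∫ u_x²
    have hIw2 : (∫ x in (0:ℝ)..L, 2 * x * (pdx u τ x * pdx (pdx u) τ x))
        = - ∫ x in (0:ℝ)..L, pdx u τ x ^ 2 := by
      have hps : ∀ x ∈ uIcc (0:ℝ) L, HasDerivAt (fun y => y * pdx u τ y ^ 2)
          (pdx u τ x ^ 2 + 2 * x * (pdx u τ x * pdx (pdx u) τ x)) x := by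
        intro x _
        have h := (hasDerivAt_id x).fun_mul ((hasDerivAt_pdx hvsm τ x).fun_pow 2)
        refine h.congr_deriv ?_
        push_cast; simp only [id_eq]; ring
      have key := intervalIntegral.integral_eq_sub_of_hasDerivAt hps
        (((hcv.pow 2).add (hcid.mul (hcv.mul hcw))).intervalIntegrable _ _)
      rw [intervalIntegral.integral_add ((hcv.fun_pow 2).intervalIntegrable _ _)
        ((hcid.fun_mul (hcv.fun_mul hcw)).intervalIntegrable _ _)] at key
      have key2 : (∫ x in (0:ℝ)..L, pdx u τ x ^ 2)
          + (∫ x in (0:ℝ)..L, 2 * x * (pdx u τ x * pdx (pdx u) τ x)) = 0 := by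
        simpa [hbvL] using key
      linarith [key2]
    -- identity (ii): ∫ 2xu u_xxx = 3 ∫ u_x²
    have hIz : (∫ x in (0:ℝ)..L, 2 * x * u τ x * pdx (pdx (pdx u)) τ x)
        = 3 * ∫ x in (0:ℝ)..L, pdx u τ x ^ 2 := by
      have hps : ∀ x ∈ uIcc (0:ℝ) L, HasDerivAt
          (fun y => 2 * (y * (u τ y * pdx (pdx u) τ y)))
          ((2 * (u τ x * pdx (pdx u) τ x) + 2 * x * (pdx u τ x * pdx (pdx u) τ x))
            + 2 * x * u τ x * pdx (pdx (pdx u)) τ x) x := by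
        intro x _
        have h := ((hasDerivAt_id x).fun_mul
          ((hasDerivAt_pdx hu τ x).fun_mul (hasDerivAt_pdx hwsm τ x))).const_mul (2:ℝ)
        refine h.congr_deriv ?_
        simp only [id_eq]; ring
      have ha : IntervalIntegrable (fun x => 2 * (u τ x * pdx (pdx u) τ x)) volume 0 L :=
        (continuous_const.mul (hcu.mul hcw)).intervalIntegrable _ _
      have hb : IntervalIntegrable (fun x => 2 * x * (pdx u τ x * pdx (pdx u) τ x))
          volume 0 L := (hcid.mul (hcv.mul hcw)).intervalIntegrable _ _
      have key := intervalIntegral.integral_eq_sub_of_hasDerivAt hps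
        ((ha.add hb).add hint3)
      rw [intervalIntegral.integral_add (ha.add hb) hint3,
        intervalIntegral.integral_add ha hb] at key
      have key2 : (∫ x in (0:ℝ)..L, 2 * (u τ x * pdx (pdx u) τ x))
          + (∫ x in (0:ℝ)..L, 2 * x * (pdx u τ x * pdx (pdx u) τ x))
          + (∫ x in (0:ℝ)..L, 2 * x * u τ x * pdx (pdx (pdx u)) τ x) = 0 := by
        simpa [hbL] using key
      linarith [key2, hIw1, hIw2]
    -- identity (iii): ∫ (2ug + 2x u_x g) + ∫ 2xu g_x = 0
    have hIg : (∫ x in (0:ℝ)..L, (2 * u τ x * g τ x + 2 * x * pdx u τ x * g τ x))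
        + (∫ x in (0:ℝ)..L, 2 * x * u τ x * pdx g τ x) = 0 := by
      have hps : ∀ x ∈ uIcc (0:ℝ) L, HasDerivAt (fun y => 2 * (y * (u τ y * g τ y)))
          ((2 * u τ x * g τ x + 2 * x * pdx u τ x * g τ x)
            + 2 * x * u τ x * pdx g τ x) x := by
        intro x _
        have h := ((hasDerivAt_id x).fun_mul
          ((hasDerivAt_pdx hu τ x).fun_mul (hasDerivAt_pdx hg τ x))).const_mul (2:ℝ)
        refine h.congr_deriv ?_
        simp only [id_eq]; ring
      have ha : IntervalIntegrable
          (fun x => 2 * u τ x * g τ x + 2 * x * pdx u τ x * g τ x) volume 0 L :=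
        (((continuous_const.mul hcu).mul hcg1).add
          ((hcid.mul hcv).mul hcg1)).intervalIntegrable _ _
      have key := intervalIntegral.integral_eq_sub_of_hasDerivAt hps (ha.add hint1)
      rw [intervalIntegral.integral_add ha hint1] at key
      simpa [hbL] using key
    -- put everything together
    rw [hA, hB, hIv, hIz]
    simp only [hDdef]
    linarith [hIg]
  have hcu : Continuous (u t) := cont_slice hu.continuous t
  -- pointwise bound on the cross terms
  have hCross : ∀ τ ∈ Ioo (0:ℝ) T,
      - (∫ x in (0:ℝ)..L, (2 * u τ x * g τ x + 2 * x * pdx u τ x * g τ x))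
        ≤ (∫ x in (0:ℝ)..L, u τ x ^ 2) + D τ + (1 + L ^ 2) * cg τ := by
    intro τ _
    have hcu : Continuous (u τ) := cont_slice hu.continuous τ
    have hcv : Continuous (pdx u τ) := cont_slice (contDiff_pdx hu).continuous τ
    have hcg2 : Continuous (g τ) := cont_slice hg.continuous τ
    have hmono : ∫ x in (0:ℝ)..L, -(2 * u τ x * g τ x + 2 * x * pdx u τ x * g τ x)
        ≤ ∫ x in (0:ℝ)..L, (u τ x ^ 2 + pdx u τ x ^ 2 + (1 + L ^ 2) * g τ x ^ 2) := by
      refine intervalIntegral.integral_mono_on hL.le ?_ ?_ ?_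
      · exact (((continuous_const.mul hcu).mul hcg2).add
          (((continuous_const.mul continuous_id).mul hcv).mul hcg2)).neg.intervalIntegrable _ _
      · exact (((hcu.pow 2).add (hcv.pow 2)).add
          (continuous_const.mul (hcg2.pow 2))).intervalIntegrable _ _
      · intro x hx
        have h1 : x ^ 2 ≤ L ^ 2 := by nlinarith [hx.1, hx.2]
        nlinarith [sq_nonneg (u τ x + g τ x), sq_nonneg (pdx u τ x + x * g τ x),
          sq_nonneg (g τ x), h1]
    have hsplit : ∫ x in (0:ℝ)..L, (u τ x ^ 2 + pdx u τ x ^ 2 + (1 + L ^ 2) * g τ x ^ 2)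
        = (∫ x in (0:ℝ)..L, u τ x ^ 2) + D τ + (1 + L ^ 2) * cg τ := by
      rw [intervalIntegral.integral_add (((hcu.fun_pow 2).fun_add (hcv.fun_pow 2)).intervalIntegrable _ _)
        ((continuous_const.fun_mul (hcg2.fun_pow 2)).intervalIntegrable _ _),
        intervalIntegral.integral_add ((hcu.fun_pow 2).intervalIntegrable _ _)
          ((hcv.fun_pow 2).intervalIntegrable _ _),
        intervalIntegral.integral_const_mul]
    rw [intervalIntegral.integral_neg] at hmono
    linarith [hmono, hsplit.ge, hsplit.le]
  -- interpolation inequality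
  have hInterp : ∀ τ ∈ Icc (0:ℝ) T,
      (∫ x in (0:ℝ)..L, u τ x ^ 2) ≤ δ ^ 2 * D τ + (1 / δ) * E τ := by
    intro τ hτ
    obtain ⟨hb0, hbL, hbvL⟩ := hbc τ hτ
    have hcu : Continuous (u τ) := cont_slice hu.continuous τ
    have hcv : Continuous (pdx u τ) := cont_slice (contDiff_pdx hu).continuous τ
    have hrep : ∀ x ∈ Icc (0:ℝ) L, u τ x = ∫ s in (0:ℝ)..x, pdx u τ s := by
      intro x _
      have h := intervalIntegral.integral_eq_sub_of_hasDerivAt (a := (0:ℝ)) (b := x)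
        (f := u τ) (fun s _ => hasDerivAt_pdx hu τ s) (hcv.intervalIntegrable _ _)
      rw [h, hb0, sub_zero]
    have hx2 : ∀ x ∈ Icc (0:ℝ) δ, (u τ x) ^ 2 ≤ δ * D τ := by
      intro x hx
      rw [hrep x ⟨hx.1, hx.2.trans hδL⟩]
      have hCS := sq_integral_le hcv hx.1
      have h1 : (∫ s in (0:ℝ)..x, pdx u τ s ^ 2) ≤ D τ := by
        have hadd : (∫ s in (0:ℝ)..x, pdx u τ s ^ 2) + (∫ s in x..L, pdx u τ s ^ 2)
            = ∫ s in (0:ℝ)..L, pdx u τ s ^ 2 :=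
          intervalIntegral.integral_add_adjacent_intervals
            ((hcv.pow 2).intervalIntegrable 0 x) ((hcv.pow 2).intervalIntegrable x L)
        have h2 : 0 ≤ ∫ s in x..L, pdx u τ s ^ 2 :=
          intervalIntegral.integral_nonneg (hx.2.trans hδL) fun s _ => sq_nonneg _
        simp only [hDdef]
        linarith [hadd]
      have h2 : 0 ≤ ∫ s in (0:ℝ)..x, pdx u τ s ^ 2 :=
        intervalIntegral.integral_nonneg hx.1 fun s _ => sq_nonneg _
      calc (∫ s in (0:ℝ)..x, pdx u τ s) ^ 2 ≤ x * ∫ s in (0:ℝ)..x, pdx u τ s ^ 2 := hCS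
        _ ≤ δ * D τ := mul_le_mul hx.2 h1 h2 hδ0.le
    have hsplit : (∫ x in (0:ℝ)..L, u τ x ^ 2)
        = (∫ x in (0:ℝ)..δ, u τ x ^ 2) + ∫ x in δ..L, u τ x ^ 2 :=
      (intervalIntegral.integral_add_adjacent_intervals
        ((hcu.pow 2).intervalIntegrable _ _) ((hcu.pow 2).intervalIntegrable _ _)).symm
    have hb1 : (∫ x in (0:ℝ)..δ, u τ x ^ 2) ≤ δ ^ 2 * D τ := by
      have h : (∫ x in (0:ℝ)..δ, u τ x ^ 2) ≤ ∫ _x in (0:ℝ)..δ, δ * D τ :=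
        intervalIntegral.integral_mono_on hδ0.le
          ((hcu.pow 2).intervalIntegrable _ _) intervalIntegrable_const
          (fun x hx => hx2 x hx)
      rw [intervalIntegral.integral_const] at h
      calc (∫ x in (0:ℝ)..δ, u τ x ^ 2) ≤ (δ - 0) • (δ * D τ) := h
        _ = δ ^ 2 * D τ := by simp [smul_eq_mul]; ring
    have hb2 : (∫ x in δ..L, u τ x ^ 2) ≤ (1 / δ) * E τ := by
      have h1δ : δ * (1 / δ) = 1 := by field_simp
      have hpt : ∀ x ∈ Icc δ L, u τ x ^ 2 ≤ (1 / δ) * (x * u τ x ^ 2) := by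
        intro x hx
        have hxδ : (1:ℝ) ≤ x / δ := (one_le_div hδ0).2 hx.1
        calc u τ x ^ 2 = 1 * u τ x ^ 2 := (one_mul _).symm
          _ ≤ (x / δ) * u τ x ^ 2 := mul_le_mul_of_nonneg_right hxδ (sq_nonneg _)
          _ = (1 / δ) * (x * u τ x ^ 2) := by ring
      have h : (∫ x in δ..L, u τ x ^ 2) ≤ ∫ x in δ..L, (1 / δ) * (x * u τ x ^ 2) :=
        intervalIntegral.integral_mono_on hδL
          ((hcu.pow 2).intervalIntegrable _ _)
          ((continuous_const.mul ((continuous_id.mul (hcu.pow 2)))).intervalIntegrable _ _)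
          hpt
      · have h2 : ∫ x in δ..L, (1 / δ) * (x * u τ x ^ 2)
            = (1 / δ) * ∫ x in δ..L, x * u τ x ^ 2 :=
          intervalIntegral.integral_const_mul _ _
        have h3 : (∫ x in δ..L, x * u τ x ^ 2) ≤ E τ := by
          have hadd : (∫ x in (0:ℝ)..δ, x * u τ x ^ 2) + (∫ x in δ..L, x * u τ x ^ 2)
              = ∫ x in (0:ℝ)..L, x * u τ x ^ 2 :=
            intervalIntegral.integral_add_adjacent_intervals
              ((continuous_id.mul (hcu.pow 2)).intervalIntegrable 0 δ)
              ((continuous_id.mul (hcu.pow 2)).intervalIntegrable δ L)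
          have h4 : 0 ≤ ∫ x in (0:ℝ)..δ, x * u τ x ^ 2 :=
            intervalIntegral.integral_nonneg hδ0.le fun x hx => mul_nonneg hx.1 (sq_nonneg _)
          simp only [hEdef]
          linarith [hadd]
        calc (∫ x in δ..L, u τ x ^ 2) ≤ ∫ x in δ..L, (1 / δ) * (x * u τ x ^ 2) := h
          _ = (1 / δ) * ∫ x in δ..L, x * u τ x ^ 2 := h2
          _ ≤ (1 / δ) * E τ := by
              refine mul_le_mul_of_nonneg_left h3 (by positivity)
    linarith [hsplit.le, hb1, hb2]
  -- combined derivative bound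
  have hE' : ∀ τ ∈ Ioo (0:ℝ) T,
      (∫ x in (0:ℝ)..L, 2 * x * u τ x * pdt u τ x) ≤ K * E τ - D τ + (1 + L ^ 2) * cg τ := by
    intro τ hτ
    have h1 := hIdent τ hτ
    have h2 := hCross τ hτ
    have h3 := hInterp τ ⟨hτ.1.le, hτ.2.le⟩
    have h4 : 2 * δ ^ 2 ≤ 1 := by nlinarith [hδhalf, hδ0]
    have h5 : 2 * (1 / δ) = K := by rw [hKdef]; ring
    have hD := hDnn τ
    have hE := hEnn τ
    nlinarith [hDnn τ, hEnn τ]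
  -- ψ and its derivative
  set ψ : ℝ → ℝ := fun τ => E τ + ID τ - G τ with hψdef
  have hψd : ∀ τ : ℝ, HasDerivAt ψ
      ((∫ x in (0:ℝ)..L, 2 * x * u τ x * pdt u τ x) + D τ - (1 + L ^ 2) * cg τ) τ := by
    intro τ
    have h1 : HasDerivAt ID (D τ) τ :=
      intervalIntegral.integral_hasDerivAt_right (hDc.intervalIntegrable _ _)
        (hDc.stronglyMeasurableAtFilter _ _) hDc.continuousAt
    have h2 : HasDerivAt G ((1 + L ^ 2) * cg τ) τ :=
      intervalIntegral.integral_hasDerivAt_right ((continuous_const.mul hcgc).intervalIntegrable _ _)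
        ((continuous_const.mul hcgc).stronglyMeasurableAtFilter _ _) (continuous_const.mul hcgc).continuousAt
    exact ((hEd τ).add h1).sub h2
  have hEcont : Continuous E := by
    refine continuous_iff_continuousAt.2 fun τ => (hEd τ).continuousAt
  have hψcont : Continuous ψ := by
    refine hEcont.add ?_ |>.sub ?_
    · exact continuous_primitive (hDc.intervalIntegrable) 0
    · exact continuous_primitive ((continuous_const.mul hcgc).intervalIntegrable) 0
  -- Gronwall via monotonicity of ρ
  set ρ : ℝ → ℝ := fun τ => Real.exp (-K * τ) * (ψ τ + G T) with hρdef
  have hρanti : AntitoneOn ρ (Icc 0 T) := by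
    apply antitoneOn_of_deriv_nonpos (convex_Icc 0 T)
    · exact ((Real.continuous_exp.comp (continuous_const.mul continuous_id)).mul
        (hψcont.add continuous_const)).continuousOn
    · intro τ hτ
      exact ((((hasDerivAt_id τ).const_mul (-K)).exp.mul
        ((hψd τ).add_const (G T)))).differentiableAt.differentiableWithinAt
    · intro τ hτ
      rw [interior_Icc] at hτ
      have h1 : HasDerivAt (fun s : ℝ => Real.exp (-K * s))
          (Real.exp (-K * τ) * (-K * 1)) τ := ((hasDerivAt_id τ).const_mul (-K)).exp
      have hd : HasDerivAt ρ (Real.exp (-K * τ) * (-K * 1) * (ψ τ + G T)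
          + Real.exp (-K * τ) * ((∫ x in (0:ℝ)..L, 2 * x * u τ x * pdt u τ x)
            + D τ - (1 + L ^ 2) * cg τ)) τ := h1.mul ((hψd τ).add_const (G T))
      rw [hd.deriv]
      have hb := hE' τ hτ
      have hψb : ψ τ + G T ≥ E τ := by
        have := hGmono τ ⟨hτ.1.le, hτ.2.le⟩
        have := hIDnn τ ⟨hτ.1.le, hτ.2.le⟩
        simp only [hψdef]; linarith
      have hexp : 0 < Real.exp (-K * τ) := Real.exp_pos _
      have h6 : Real.exp (-K * τ) * (∫ x in (0:ℝ)..L, 2 * x * u τ x * pdt u τ x)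
          ≤ Real.exp (-K * τ) * (K * E τ - D τ + (1 + L ^ 2) * cg τ) :=
        mul_le_mul_of_nonneg_left hb hexp.le
      have h7 : (K * Real.exp (-K * τ)) * E τ ≤ (K * Real.exp (-K * τ)) * (ψ τ + G T) :=
        mul_le_mul_of_nonneg_left hψb (mul_nonneg hK0.le hexp.le)
      nlinarith [h6, h7]
  -- conclude
  have hρ0 : ∀ τ ∈ Icc (0:ℝ) T, ψ τ + G T ≤ Real.exp (K * T) * (E 0 + G T) := by
    intro τ hτ
    have h0 : (0:ℝ) ∈ Icc (0:ℝ) T := ⟨le_rfl, hT.le⟩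
    have := hρanti h0 hτ hτ.1
    have hρ0val : ρ 0 = ψ 0 + G T := by simp [hρdef]
    have hψ0 : ψ 0 = E 0 := by simp [hψdef, hGdef, hIDdef]
    have hexp : 0 < Real.exp (-K * τ) := Real.exp_pos _
    have h2 : ψ τ + G T ≤ Real.exp (K * τ) * (E 0 + G T) := by
      have h3 : Real.exp (-K * τ) * (ψ τ + G T) ≤ E 0 + G T := by
        simpa [hρdef, hψ0] using this
      have h4 : Real.exp (K * τ) * (Real.exp (-K * τ) * (ψ τ + G T))
          ≤ Real.exp (K * τ) * (E 0 + G T) := by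
        exact mul_le_mul_of_nonneg_left h3 (Real.exp_pos _).le
      rwa [← mul_assoc, ← Real.exp_add, (by ring : K * τ + -K * τ = 0), Real.exp_zero,
        one_mul] at h4
    have h5 : Real.exp (K * τ) ≤ Real.exp (K * T) :=
      Real.exp_le_exp.2 (by nlinarith [hτ.2, hK0])
    have h6 : 0 ≤ E 0 + G T := by
      have := hGnn T ⟨hT.le, le_rfl⟩; linarith [hEnn 0]
    nlinarith [h2, h5, h6, Real.exp_pos (K * τ)]
  have hEt : E t + ID T ≤ 2 * Real.exp (K * T) * (E 0 + G T) := by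
    have h1 := hρ0 t ht
    have h2 := hρ0 T ⟨hT.le, le_rfl⟩
    have h3 := hGmono t ht
    have h4 := hIDnn t ht
    have h5 := hEnn T
    simp only [hψdef] at h1 h2
    linarith
  -- final arithmetic
  have hGT : G T = (1 + L ^ 2) * ∫ τ in (0:ℝ)..T, cg τ := by
    simp only [hGdef]
    exact intervalIntegral.integral_const_mul _ _
  have hIGnn : 0 ≤ ∫ τ in (0:ℝ)..T, cg τ :=
    intervalIntegral.integral_nonneg hT.le fun s _ => hcgnn s
  calc E t + ∫ τ in (0:ℝ)..T, D τ ≤ 2 * Real.exp (K * T) * (E 0 + G T) := hEt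
    _ ≤ 2 * Real.exp (K * T) * (1 + L ^ 2) * (E 0 + ∫ τ in (0:ℝ)..T, cg τ) := by
        rw [hGT]
        have h := hEnn 0
        nlinarith [mul_nonneg (mul_nonneg
          (le_of_lt (by positivity : (0:ℝ) < 2 * Real.exp (K * T))) (sq_nonneg L)) h]
end
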